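/- Let p be a prime and let Λ = ℤ_p⟦T⟧ be the power series ring in one variable over the ring of p-adic integers. If M is a finitely generated Λ-module with projective dimension pd_Λ(M) ≤ 1, then M has no nonzero Λ-submodule of finite cardinality. (This is the commutative rank-one case of Venjakob's Proposition 2.2 quoted and used by the paper: over Λ(Γ) with Γ ≅ ℤ_p, pseudo-null submodules are exactly the finite submodules.) -/

import Mathlib

open PowerSeries

section Aux

variable {p : ℕ} [Fact p.Prime]

private lemma p_cast_ne_zero : (p : PowerSeries ℤ_[p]) ≠ 0 := by
  intro h
  have h0 := congrArg (constantCoeff (R := ℤ_[p])) h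
  rw [map_natCast, map_zero] at h0
  exact Nat.cast_ne_zero.2 (Fact.out : p.Prime).ne_zero h0

private lemma p_dvd_iff (f : PowerSeries ℤ_[p]) :
    (p : PowerSeries ℤ_[p]) ∣ f ↔ PowerSeries.map (PadicInt.toZMod) f = 0 := by
  constructor
  · rintro ⟨g, rfl⟩
    rw [map_mul, map_natCast]
    have : ((p : ℕ) : PowerSeries (ZMod p)) = 0 := by
      rw [← map_natCast (C (R := ZMod p)) p, ZMod.natCast_self, map_zero]
    rw [this, zero_mul]
  · intro h
    have hd : ∀ n, (p : ℤ_[p]) ∣ PowerSeries.coeff n f := by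
      intro n
      have h1 : PadicInt.toZMod (PowerSeries.coeff n f) = 0 := by
        have := congrArg (PowerSeries.coeff n) h
        simpa [PowerSeries.coeff_map] using this
      have h2 : PowerSeries.coeff n f ∈ RingHom.ker (PadicInt.toZMod (p := p)) := h1
      rwa [PadicInt.ker_toZMod, PadicInt.maximalIdeal_eq_span_p,
        Ideal.mem_span_singleton] at h2
    refine ⟨PowerSeries.mk fun n => (hd n).choose, ?_⟩
    ext n
    rw [← map_natCast (C (R := ℤ_[p])) p, PowerSeries.coeff_C_mul, PowerSeries.coeff_mk]
    exact (hd n).choose_spec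

/-- Key divisibility lemma: if `X^b * u = p^a * v` in `ℤ_p⟦X⟧` then `p^a ∣ u`. -/
private lemma pow_p_dvd {b : ℕ} : ∀ (a : ℕ) (u v : PowerSeries ℤ_[p]),
    (X : PowerSeries ℤ_[p]) ^ b * u = (p : PowerSeries ℤ_[p]) ^ a * v →
    (p : PowerSeries ℤ_[p]) ^ a ∣ u := by
  intro a
  induction a with
  | zero => intro u v _; simp
  | succ a ih =>
    intro u v h
    have h1 : (p : PowerSeries ℤ_[p]) ∣ (X : PowerSeries ℤ_[p]) ^ b * u :=
      ⟨(p : PowerSeries ℤ_[p]) ^ a * v, by rw [h]; ring⟩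
    have h2 := (p_dvd_iff _).1 h1
    rw [map_mul, map_pow, PowerSeries.map_X] at h2
    have hX : (X : PowerSeries (ZMod p)) ^ b ≠ 0 := pow_ne_zero _ X_ne_zero
    have hu0 : PowerSeries.map (PadicInt.toZMod) u = 0 := by
      rcases mul_eq_zero.1 h2 with h' | h'
      · exact absurd h' hX
      · exact h'
    obtain ⟨u1, rfl⟩ := (p_dvd_iff u).2 hu0
    have h' : (X : PowerSeries ℤ_[p]) ^ b * u1 = (p : PowerSeries ℤ_[p]) ^ a * v := by
      apply mul_left_cancel₀ (p_cast_ne_zero (p := p))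
      linear_combination h
    obtain ⟨w, hw⟩ := ih u1 v h'
    exact ⟨w, by rw [hw]; ring⟩

/-- In a finite submodule, every element is killed by a power of any `z` such that
`1 - z^k` is a unit for all `k ≥ 1`. -/
private lemma exists_pow_smul_eq_zero {M : Type*} [AddCommGroup M]
    [Module (PowerSeries ℤ_[p]) M] (N : Submodule (PowerSeries ℤ_[p]) M)
    (hN : (N : Set M).Finite) {x : M} (hx : x ∈ N) (z : PowerSeries ℤ_[p])
    (hz : ∀ k : ℕ, 1 ≤ k → IsUnit (1 - z ^ k)) : ∃ a : ℕ, z ^ a • x = 0 := by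
  have : Finite N := hN.to_subtype
  obtain ⟨i, j, hne, hij⟩ := Finite.exists_ne_map_eq_of_infinite
    (fun n : ℕ => (⟨z ^ n • x, N.smul_mem _ hx⟩ : N))
  have key : ∀ i j : ℕ, i < j → z ^ i • x = z ^ j • x → ∃ a : ℕ, z ^ a • x = 0 := by
    intro i j hlt heq
    refine ⟨i, ?_⟩
    have hu := hz (j - i) (by omega)
    have hmul : z ^ i * (1 - z ^ (j - i)) = z ^ i - z ^ j := by
      rw [mul_sub, mul_one, ← pow_add]
      congr 2
      omega
    have h0 : (1 - z ^ (j - i)) • (z ^ i • x) = 0 := by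
      rw [smul_smul, mul_comm, hmul, sub_smul, heq, sub_self]
    exact (hu.smul_eq_zero).1 h0
  have hval : z ^ i • x = z ^ j • x := congrArg Subtype.val hij
  rcases lt_or_gt_of_ne hne with h | h
  · exact key i j h hval
  · exact key j i h hval.symm

private lemma isUnit_one_sub_X_pow {k : ℕ} (hk : 1 ≤ k) :
    IsUnit (1 - (X : PowerSeries ℤ_[p]) ^ k) := by
  rw [PowerSeries.isUnit_iff_constantCoeff, map_sub, map_one, map_pow, constantCoeff_X,
    zero_pow (by omega), sub_zero]
  exact isUnit_one

private lemma isUnit_one_sub_p_pow {k : ℕ} (hk : 1 ≤ k) :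
    IsUnit (1 - (p : PowerSeries ℤ_[p]) ^ k) := by
  rw [PowerSeries.isUnit_iff_constantCoeff, map_sub, map_one, map_pow, map_natCast]
  have hnorm : ‖(p : ℤ_[p]) ^ k‖ < 1 := by
    rw [norm_pow, PadicInt.norm_p]
    have hp1 : (1 : ℝ) < (p : ℝ) := by
      exact_mod_cast (Fact.out : p.Prime).one_lt
    calc ((p : ℝ)⁻¹) ^ k ≤ (p : ℝ)⁻¹ ^ 1 := by
          apply pow_le_pow_of_le_one (by positivity) (by
            rw [inv_le_one_iff₀]; right; linarith) hk
        _ < 1 := by rw [pow_one]; exact inv_lt_one_of_one_lt₀ hp1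
  exact ⟨Units.oneSub _ hnorm, rfl⟩

end Aux

/-- Commutative rank-one case of Venjakob's Proposition 2.2: if `M` is a finitely
generated module over `Λ = ℤ_p⟦T⟧` of projective dimension at most `1` (i.e. `M` admits a
projective resolution of length at most `1`, equivalently a surjection from a finite free
module with projective kernel), then `M` has no nonzero `Λ`-submodule of finite
cardinality. -/
theorem no_nontrivial_finite_submodule_of_pd_le_one
    (p : ℕ) [Fact p.Prime]
    (M : Type*) [AddCommGroup M] [Module (PowerSeries ℤ_[p]) M]
    [Module.Finite (PowerSeries ℤ_[p]) M]
    (hpd : ∃ (n : ℕ) (f : (Fin n → PowerSeries ℤ_[p]) →ₗ[PowerSeries ℤ_[p]] M),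
      Function.Surjective f ∧
      Module.Projective (PowerSeries ℤ_[p]) (LinearMap.ker f))
    (N : Submodule (PowerSeries ℤ_[p]) M) (hN : (N : Set M).Finite) :
    N = ⊥ := by
  classical
  obtain ⟨n, f, hf, hproj⟩ := hpd
  ext x
  simp only [Submodule.mem_bot]
  constructor
  · intro hx
    obtain ⟨a, ha⟩ := exists_pow_smul_eq_zero N hN hx (p : PowerSeries ℤ_[p])
      (fun k hk => isUnit_one_sub_p_pow hk)
    obtain ⟨b, hb⟩ := exists_pow_smul_eq_zero N hN hx (X : PowerSeries ℤ_[p])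
      (fun k hk => isUnit_one_sub_X_pow hk)
    obtain ⟨y, rfl⟩ := hf x
    have hk1 : (p : PowerSeries ℤ_[p]) ^ a • y ∈ LinearMap.ker f := by
      rw [LinearMap.mem_ker, map_smul]; exact ha
    have hk2 : (X : PowerSeries ℤ_[p]) ^ b • y ∈ LinearMap.ker f := by
      rw [LinearMap.mem_ker, map_smul]; exact hb
    obtain ⟨s, hs⟩ := (Module.projective_def).1 hproj
    set k1 : LinearMap.ker f := ⟨_, hk1⟩ with hk1def
    set k2 : LinearMap.ker f := ⟨_, hk2⟩ with hk2def
    have hrel : (X : PowerSeries ℤ_[p]) ^ b • k1 = (p : PowerSeries ℤ_[p]) ^ a • k2 := by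
      apply Subtype.ext
      show (X : PowerSeries ℤ_[p]) ^ b • ((p : PowerSeries ℤ_[p]) ^ a • y)
          = (p : PowerSeries ℤ_[p]) ^ a • ((X : PowerSeries ℤ_[p]) ^ b • y)
      rw [smul_smul, smul_smul, mul_comm]
    have hrel' : (X : PowerSeries ℤ_[p]) ^ b • s k1 = (p : PowerSeries ℤ_[p]) ^ a • s k2 := by
      rw [← map_smul, ← map_smul, hrel]
    have hdvd : ∀ c : LinearMap.ker f, ((p : PowerSeries ℤ_[p]) ^ a) ∣ s k1 c := by
      intro c
      have hcoord := congrArg (fun g => g c) hrel'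
      simp only [Finsupp.smul_apply, smul_eq_mul] at hcoord
      exact pow_p_dvd a (s k1 c) (s k2 c) hcoord
    obtain ⟨w, hsmul⟩ : ∃ w : LinearMap.ker f →₀ PowerSeries ℤ_[p],
        (p : PowerSeries ℤ_[p]) ^ a • w = s k1 := by
      refine ⟨Finsupp.mapRange
        (fun z => if h : ((p : PowerSeries ℤ_[p]) ^ a) ∣ z then h.choose else 0) ?_ (s k1), ?_⟩
      · simp only [dvd_zero, dite_true]
        exact (mul_eq_zero.1 (dvd_zero ((p : PowerSeries ℤ_[p]) ^ a)).choose_spec.symm).resolve_left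
          (pow_ne_zero _ p_cast_ne_zero)
      · apply Finsupp.ext
        intro c
        rw [Finsupp.smul_apply, Finsupp.mapRange_apply, smul_eq_mul, dif_pos (hdvd c)]
        exact ((hdvd c).choose_spec).symm
    set w' : LinearMap.ker f := Finsupp.linearCombination (PowerSeries ℤ_[p]) id w with hw'
    have hkey : (p : PowerSeries ℤ_[p]) ^ a • w' = k1 := by
      rw [hw', ← map_smul, hsmul]
      exact hs k1
    have hyval : (p : PowerSeries ℤ_[p]) ^ a • y
        = (p : PowerSeries ℤ_[p]) ^ a • (w' : Fin n → PowerSeries ℤ_[p]) := by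
      have := congrArg Subtype.val hkey
      exact this.symm
    have hy_eq : y = (w' : Fin n → PowerSeries ℤ_[p]) := by
      funext i
      have hcoord := congrArg (fun v => v i) hyval
      simp only [Pi.smul_apply, smul_eq_mul] at hcoord
      exact mul_left_cancel₀ (pow_ne_zero _ p_cast_ne_zero) hcoord
    have hmem : y ∈ LinearMap.ker f := hy_eq ▸ w'.2
    exact LinearMap.mem_ker.1 hmem
  · rintro rfl
    exact N.zero_mem
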